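/- Let G be a graph of maximum degree at most k−1 with χ(G) = k ≥ 4. Then every proper k-vertex coloring of G has all color classes of odd size if and only if G is the disjoint union of an odd number of k-cliques. -/

import Mathlib

open Finset

-- The vertex label induced by an edge coloring: `twinLabel G s v = Σ_{e ∈ E_v} s e` in `ZMod k`.
open scoped Classical in
noncomputable def twinLabel {V : Type*} [Fintype V] (G : SimpleGraph V) {k : ℕ}
    (s : Sym2 V → ZMod k) (v : V) : ZMod k :=
  ∑ e ∈ G.incidenceFinset v, s e

/-- `s` is an improper twin `k`-edge coloring of `G`: the induced vertex labeling
is a proper vertex coloring. -/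
def IsImproperTwin {V : Type*} [Fintype V] (G : SimpleGraph V) (k : ℕ)
    (s : Sym2 V → ZMod k) : Prop :=
  ∀ ⦃u v : V⦄, G.Adj u v → twinLabel G s u ≠ twinLabel G s v

/-- The improper twin chromatic index: the least `k ≥ 2` admitting an improper twin
`k`-edge coloring. -/
noncomputable def improperTwinIndex {V : Type*} [Fintype V] (G : SimpleGraph V) : ℕ :=
  sInf {k | 2 ≤ k ∧ ∃ s : Sym2 V → ZMod k, IsImproperTwin G k s}

section Aux

variable {V : Type*} [Fintype V] [DecidableEq V] {G : SimpleGraph V} [DecidableRel G.Adj] {k : ℕ}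

/-- If some color `j` is unused on the closed neighborhood of `u`, recoloring `u` to `j`
changes the parity of a color class, contradicting all-odd classes. -/
lemma aux_recolor (hodd : ∀ C : G.Coloring (Fin k), ∀ i : Fin k, Odd (C.colorClass i).ncard)
    (C : G.Coloring (Fin k)) (u : V) (j : Fin k) (hj : j ≠ C u)
    (hnbr : ∀ w, G.Adj u w → C w ≠ j) : False := by
  have valid : ∀ {x y : V}, G.Adj x y →
      (fun z => if z = u then j else C z) x ≠ (fun z => if z = u then j else C z) y := by
    intro x y hxy
    simp only
    have hxyne : x ≠ y := G.ne_of_adj hxy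
    by_cases hx : x = u
    · subst hx
      rw [if_pos rfl, if_neg (Ne.symm hxyne)]
      exact fun h => hnbr y hxy h.symm
    · rw [if_neg hx]
      by_cases hy : y = u
      · subst hy
        rw [if_pos rfl]
        exact fun h => hnbr x hxy.symm h
      · rw [if_neg hy]; exact C.valid hxy
  let C' : G.Coloring (Fin k) := SimpleGraph.Coloring.mk _ valid
  have hclass : C'.colorClass (C u) = C.colorClass (C u) \ {u} := by
    ext v
    have hC'v : C' v = if v = u then j else C v := rfl
    simp only [SimpleGraph.Coloring.colorClass, Set.mem_setOf_eq, Set.mem_diff,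
      Set.mem_singleton_iff, hC'v]
    by_cases hv : v = u
    · subst hv
      simp [hj]
    · simp only [if_neg hv]
      exact ⟨fun h => ⟨h, hv⟩, fun h => h.1⟩
  have hu : u ∈ C.colorClass (C u) := rfl
  have h1 := hodd C (C u)
  have h2 := hodd C' (C u)
  rw [hclass, Set.ncard_diff_singleton_of_mem hu] at h2
  have hpos : 1 ≤ (C.colorClass (C u)).ncard := by
    rw [Nat.one_le_iff_ne_zero]
    intro h0
    rw [Set.ncard_eq_zero (Set.toFinite _)] at h0
    rw [h0] at hu
    exact hu
  obtain ⟨a, ha⟩ := h1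
  obtain ⟨b, hb⟩ := h2
  omega

/-- In every coloring, each color appears on the closed neighborhood of every vertex. -/
lemma aux_surj (hodd : ∀ C : G.Coloring (Fin k), ∀ i : Fin k, Odd (C.colorClass i).ncard)
    (C : G.Coloring (Fin k)) (u : V) (j : Fin k) :
    j = C u ∨ ∃ w, G.Adj u w ∧ C w = j := by
  by_contra h
  push_neg at h
  exact aux_recolor hodd C u j h.1 fun w hw => h.2 w hw

lemma aux_image (hodd : ∀ C : G.Coloring (Fin k), ∀ i : Fin k, Odd (C.colorClass i).ncard)
    (C : G.Coloring (Fin k)) (u : V) :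
    (insert u (G.neighborFinset u)).image C = Finset.univ := by
  apply Finset.eq_univ_of_forall
  intro j
  rcases aux_surj hodd C u j with h | ⟨w, hw, hwj⟩
  · exact Finset.mem_image.2 ⟨u, Finset.mem_insert_self u _, h.symm⟩
  · exact Finset.mem_image.2 ⟨w, Finset.mem_insert_of_mem ((G.mem_neighborFinset u w).2 hw), hwj⟩

lemma aux_card (hodd : ∀ C : G.Coloring (Fin k), ∀ i : Fin k, Odd (C.colorClass i).ncard)
    (hdeg : ∀ v : V, G.degree v ≤ k - 1) (hk : 4 ≤ k)
    (C : G.Coloring (Fin k)) (u : V) :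
    (insert u (G.neighborFinset u)).card = k := by
  have h1 : ((insert u (G.neighborFinset u)).image C).card = k := by
    rw [aux_image hodd C u, Finset.card_univ, Fintype.card_fin]
  have h2 : ((insert u (G.neighborFinset u)).image C).card ≤
      (insert u (G.neighborFinset u)).card := Finset.card_image_le
  have h3 : (insert u (G.neighborFinset u)).card ≤ G.degree u + 1 := by
    calc (insert u (G.neighborFinset u)).card ≤ (G.neighborFinset u).card + 1 :=
        Finset.card_insert_le _ _
      _ = G.degree u + 1 := by rw [G.card_neighborFinset_eq_degree]
  have h4 := hdeg u
  omega

lemma aux_injOn (hodd : ∀ C : G.Coloring (Fin k), ∀ i : Fin k, Odd (C.colorClass i).ncard)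
    (hdeg : ∀ v : V, G.degree v ≤ k - 1) (hk : 4 ≤ k)
    (C : G.Coloring (Fin k)) (u : V) :
    Set.InjOn C (insert u (G.neighborFinset u) : Finset V) := by
  apply Finset.injOn_of_card_image_eq
  rw [aux_image hodd C u, Finset.card_univ, Fintype.card_fin, aux_card hodd hdeg hk C u]

/-- Kempe-swap argument: any two distinct neighbors of `u` are adjacent. -/
lemma aux_adj (hodd : ∀ C : G.Coloring (Fin k), ∀ i : Fin k, Odd (C.colorClass i).ncard)
    (hdeg : ∀ v : V, G.degree v ≤ k - 1) (hk : 4 ≤ k)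
    (C : G.Coloring (Fin k)) (u v₁ v₂ : V) (h1 : G.Adj u v₁) (h2 : G.Adj u v₂)
    (hne : v₁ ≠ v₂) : G.Adj v₁ v₂ := by
  by_contra hnadj
  set a := C v₁ with ha
  set b := C v₂ with hb
  have hv₁mem : v₁ ∈ (insert u (G.neighborFinset u) : Finset V) :=
    Finset.mem_insert_of_mem ((G.mem_neighborFinset u v₁).2 h1)
  have hv₂mem : v₂ ∈ (insert u (G.neighborFinset u) : Finset V) :=
    Finset.mem_insert_of_mem ((G.mem_neighborFinset u v₂).2 h2)
  have hab : a ≠ b := fun h => hne (aux_injOn hodd hdeg hk C u hv₁mem hv₂mem h)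
  -- find the unique b-colored neighbor w of v₁
  obtain ⟨w, hw, hwb⟩ : ∃ w, G.Adj v₁ w ∧ C w = b := by
    rcases aux_surj hodd C v₁ b with h | h
    · exact absurd h.symm hab
    · exact h
  have hwv₁ : w ≠ v₁ := fun h => hab (ha.trans (h ▸ hwb))
  have hwv₂ : w ≠ v₂ := fun h => hnadj (h ▸ hw)
  -- uniqueness
  have U1 : ∀ z, G.Adj v₁ z → C z = b → z = w := by
    intro z hz hzb
    exact aux_injOn hodd hdeg hk C v₁
      (Finset.mem_insert_of_mem ((G.mem_neighborFinset v₁ z).2 hz))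
      (Finset.mem_insert_of_mem ((G.mem_neighborFinset v₁ w).2 hw)) (by rw [hzb, hwb])
  have U2 : ∀ z, G.Adj w z → C z = a → z = v₁ := by
    intro z hz hza
    exact aux_injOn hodd hdeg hk C w
      (Finset.mem_insert_of_mem ((G.mem_neighborFinset w z).2 hz))
      (Finset.mem_insert_of_mem ((G.mem_neighborFinset w v₁).2 hw.symm)) (by rw [hza, ha])
  -- the swapped coloring
  set f : V → Fin k := fun x => if x = v₁ then b else if x = w then a else C x with hf
  have valid : ∀ {x y : V}, G.Adj x y → f x ≠ f y := by
    intro x y hxy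
    have hxyne : x ≠ y := G.ne_of_adj hxy
    simp only [hf]
    by_cases hx1 : x = v₁
    · rw [if_pos hx1]
      by_cases hyw : y = w
      · rw [if_neg (show ¬y = v₁ from fun h => hwv₁ (hyw ▸ h)), if_pos hyw]
        exact Ne.symm hab
      · have hy1 : ¬y = v₁ := fun h => hxyne (hx1.trans h.symm)
        rw [if_neg hy1, if_neg hyw]
        intro h
        exact hyw (U1 y (hx1 ▸ hxy) h.symm)
    · by_cases hxw : x = w
      · rw [if_neg hx1, if_pos hxw]
        by_cases hy1 : y = v₁
        · rw [if_pos hy1]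
          exact hab
        · have hyw : ¬y = w := fun h => hxyne (hxw.trans h.symm)
          rw [if_neg hy1, if_neg hyw]
          intro h
          exact hy1 (U2 y (hxw ▸ hxy) h.symm)
      · rw [if_neg hx1, if_neg hxw]
        by_cases hy1 : y = v₁
        · rw [if_pos hy1]
          intro h
          exact hxw (U1 x (hy1 ▸ hxy.symm) h)
        · by_cases hyw : y = w
          · rw [if_neg hy1, if_pos hyw]
            intro h
            exact hx1 (U2 x (hyw ▸ hxy.symm) h)
          · rw [if_neg hy1, if_neg hyw]
            exact C.valid hxy
  let C' : G.Coloring (Fin k) := SimpleGraph.Coloring.mk f valid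
  have hC'v₁ : C' v₁ = b := by
    show f v₁ = b
    simp [hf]
  have hC'v₂ : C' v₂ = b := by
    show f v₂ = b
    simp [hf, (Ne.symm hne : v₂ ≠ v₁), (Ne.symm hwv₂ : v₂ ≠ w), hb]
  exact hne (aux_injOn hodd hdeg hk C' u hv₁mem hv₂mem (by rw [hC'v₁, hC'v₂]))

/-- Counting lemma: if every component is a `k`-clique, then each color class of any
coloring has exactly one vertex per component. -/
lemma aux_count (hk : 4 ≤ k)
    (hclique : ∀ c : G.ConnectedComponent, c.supp.ncard = k ∧
        ∀ u v : V, u ∈ c.supp → v ∈ c.supp → u ≠ v → G.Adj u v)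
    (C : G.Coloring (Fin k)) (i : Fin k) :
    (C.colorClass i).ncard = Nat.card G.ConnectedComponent := by
  rw [← Nat.card_coe_set_eq]
  apply Nat.card_eq_of_bijective (fun v => G.connectedComponentMk v.1)
  constructor
  · rintro ⟨v, hv⟩ ⟨w, hw⟩ h
    have h' : G.connectedComponentMk v = G.connectedComponentMk w := h
    simp only [Subtype.mk_eq_mk]
    by_contra hne
    have hvm : v ∈ (G.connectedComponentMk v).supp :=
      SimpleGraph.ConnectedComponent.connectedComponentMk_mem
    have hwm : w ∈ (G.connectedComponentMk v).supp := by
      rw [h']; exact SimpleGraph.ConnectedComponent.connectedComponentMk_mem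
    have hadj := (hclique (G.connectedComponentMk v)).2 v w hvm hwm hne
    exact C.valid hadj (by rw [show C v = i from hv, show C w = i from hw])
  · intro c
    obtain ⟨hcard, hadj⟩ := hclique c
    have hinj : Set.InjOn C c.supp := by
      intro x hx y hy hxy
      by_contra hne
      exact C.valid (hadj x y hx hy hne) hxy
    have himg : (C '' c.supp).ncard = k := by
      rw [Set.ncard_image_of_injOn hinj, hcard]
    have huniv : C '' c.supp = Set.univ := by
      apply Set.eq_of_subset_of_ncard_le (Set.subset_univ _)
      rw [himg, Set.ncard_univ, Nat.card_eq_fintype_card, Fintype.card_fin]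
    have : i ∈ C '' c.supp := huniv ▸ Set.mem_univ i
    obtain ⟨v, hv, hvi⟩ := this
    refine ⟨⟨v, hvi⟩, ?_⟩
    exact (SimpleGraph.ConnectedComponent.mem_supp_iff c v).1 hv

end Aux

theorem stmt_16 {V : Type*} [Fintype V] [DecidableEq V] (G : SimpleGraph V)
    [DecidableRel G.Adj]
    (k : ℕ) (hk : 4 ≤ k) (hχ : G.chromaticNumber = k)
    (hdeg : ∀ v : V, G.degree v ≤ k - 1) :
    (∀ C : G.Coloring (Fin k), ∀ i : Fin k, Odd (C.colorClass i).ncard) ↔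
      (Odd (Nat.card G.ConnectedComponent) ∧
        ∀ c : G.ConnectedComponent, c.supp.ncard = k ∧
          ∀ u v : V, u ∈ c.supp → v ∈ c.supp → u ≠ v → G.Adj u v) := by
  have hcol : G.Colorable k := by
    rw [← SimpleGraph.chromaticNumber_le_iff_colorable, hχ]
  obtain ⟨C⟩ := hcol
  constructor
  · intro hodd
    -- The closed neighborhood of each vertex is a k-clique and closed under adjacency
    have hclosed : ∀ u x y : V, x ∈ (insert u (G.neighborFinset u) : Finset V) →
        G.Adj x y → y ∈ (insert u (G.neighborFinset u) : Finset V) := by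
      intro u x y hx hxy
      rcases Finset.mem_insert.1 hx with rfl | hx
      · exact Finset.mem_insert_of_mem ((G.mem_neighborFinset x y).2 hxy)
      · -- x is a neighbor of u; show N(x) = (insert u N(u)).erase x
        rw [G.mem_neighborFinset] at hx
        have hsub : (insert u (G.neighborFinset u)).erase x ⊆ G.neighborFinset x := by
          intro z hz
          obtain ⟨hzx, hz⟩ := Finset.mem_erase.1 hz
          rw [G.mem_neighborFinset]
          rcases Finset.mem_insert.1 hz with rfl | hz
          · exact hx.symm
          · rw [G.mem_neighborFinset] at hz
            exact aux_adj hodd hdeg hk C u x z hx hz (Ne.symm hzx)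
        have hcards : ((insert u (G.neighborFinset u)).erase x).card = k - 1 := by
          rw [Finset.card_erase_of_mem
            (Finset.mem_insert_of_mem ((G.mem_neighborFinset u x).2 hx)),
            aux_card hodd hdeg hk C u]
        have hdegx : (G.neighborFinset x).card ≤ k - 1 := by
          rw [G.card_neighborFinset_eq_degree]; exact hdeg x
        have heq : (insert u (G.neighborFinset u)).erase x = G.neighborFinset x :=
          Finset.eq_of_subset_of_card_le hsub (by omega)
        have hy : y ∈ (insert u (G.neighborFinset u)).erase x := by
          rw [heq, G.mem_neighborFinset]; exact hxy
        exact Finset.mem_of_mem_erase hy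
    have hsupp : ∀ u : V, (G.connectedComponentMk u).supp =
        ↑(insert u (G.neighborFinset u) : Finset V) := by
      intro u
      apply Set.eq_of_subset_of_subset
      · intro v hv
        rw [SimpleGraph.ConnectedComponent.mem_supp_iff, SimpleGraph.ConnectedComponent.eq] at hv
        obtain ⟨p⟩ := hv.symm
        clear hv
        -- walk induction: u reaches v, closed set
        have : ∀ {x y : V} (_ : G.Walk x y),
            x ∈ (insert u (G.neighborFinset u) : Finset V) →
            y ∈ (insert u (G.neighborFinset u) : Finset V) := by
          intro x y p
          induction p with
          | nil => exact id
          | cons h q ih => exact fun hx => ih (hclosed u _ _ hx h)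
        exact this p (Finset.mem_insert_self u _)
      · intro v hv
        rw [Finset.coe_insert, Set.mem_insert_iff] at hv
        rw [SimpleGraph.ConnectedComponent.mem_supp_iff, SimpleGraph.ConnectedComponent.eq]
        rcases hv with rfl | hv
        · exact SimpleGraph.Reachable.refl v
        · rw [Finset.mem_coe, G.mem_neighborFinset] at hv
          exact hv.symm.reachable
    have hclique : ∀ c : G.ConnectedComponent, c.supp.ncard = k ∧
        ∀ u v : V, u ∈ c.supp → v ∈ c.supp → u ≠ v → G.Adj u v := by
      intro c
      obtain ⟨u, rfl⟩ := c.exists_rep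
      have hs : SimpleGraph.ConnectedComponent.supp (Quot.mk G.Reachable u) =
          ↑(insert u (G.neighborFinset u) : Finset V) := hsupp u
      constructor
      · rw [hs, Set.ncard_coe_finset, aux_card hodd hdeg hk C u]
      · intro x y hx hy hxy
        rw [hs, Finset.mem_coe, Finset.mem_insert] at hx hy
        rcases hx with rfl | hx <;> rcases hy with rfl | hy
        · exact absurd rfl hxy
        · exact (G.mem_neighborFinset x y).1 hy
        · exact ((G.mem_neighborFinset y x).1 hx).symm
        · exact aux_adj hodd hdeg hk C u x y
            ((G.mem_neighborFinset u x).1 hx) ((G.mem_neighborFinset u y).1 hy) hxy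
    refine ⟨?_, hclique⟩
    have := hodd C ⟨0, by omega⟩
    rwa [aux_count hk hclique C ⟨0, by omega⟩] at this
  · rintro ⟨hoddc, hclique⟩ C' i
    rw [aux_count hk hclique C' i]
    exact hoddc
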